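/- Let d ≥ 3 and let D, E, F' be homogeneous binary forms of degree d−2 in ℂ[t₀,t₁] with no common zero on ℂ² ∖ {(0,0)}. Set G = D(t₀,t₁)y₁² + 2E(t₀,t₁)y₁y₂ + F'(t₀,t₁)y₂² ∈ ℂ[t₀,t₁,y₁,y₂] and R = E² − D·F' ∈ ℂ[t₀,t₁]. Let (a,b) ∈ ℂ² ∖ {(0,0)} and (c,e) ∈ ℂ² ∖ {(0,0)} satisfy G(a,b,c,e) = 0. Then all four partial derivatives ∂G/∂t₀, ∂G/∂t₁, ∂G/∂y₁, ∂G/∂y₂ vanish at (a,b,c,e) if and only if (b·t₀ − a·t₁)² divides R in ℂ[t₀,t₁]. -/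

import Mathlib

open MvPolynomial

/-! ### Auxiliary lemmas -/

/-- Evaluation of a homogeneous binary form at a scaled point. -/
lemma eval_hom_smul {n : ℕ} {φ : MvPolynomial (Fin 2) ℂ} (h : φ.IsHomogeneous n)
    (t : ℂ) (x : Fin 2 → ℂ) :
    eval (fun i => t * x i) φ = t ^ n * eval x φ := by
  rw [eval_eq, eval_eq, Finset.mul_sum]
  refine Finset.sum_congr rfl fun d hd => ?_
  have hdeg : d.degree = n := by
    by_contra hne
    exact (mem_support_iff.mp hd) (h.coeff_eq_zero hne)
  simp_rw [mul_pow, Finset.prod_mul_distrib, Finset.prod_pow_eq_pow_sum]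
  rw [← Finsupp.degree_apply, hdeg]
  ring

/-- A homogeneous binary form vanishing at `(a,b)` with `b ≠ 0` is divisible by the
corresponding linear form. -/
lemma lin_dvd_of_root_b {n : ℕ} {R : MvPolynomial (Fin 2) ℂ} (hR : R.IsHomogeneous n)
    {a b : ℂ} (hb : b ≠ 0) (h0 : eval ![a, b] R = 0) :
    (C b * X 0 - C a * X 1) ∣ R := by
  set u : MvPolynomial (Fin 1) ℂ := C (a / b) * X 0 with hu
  have hroot : Polynomial.eval u (finSuccEquiv ℂ 1 R) = 0 := by
    apply MvPolynomial.funext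
    intro x
    have key : (eval x : MvPolynomial (Fin 1) ℂ →+* ℂ) (Polynomial.eval u (finSuccEquiv ℂ 1 R))
        = Polynomial.eval (eval x u) (Polynomial.map (eval x) (finSuccEquiv ℂ 1 R)) := by
      rw [Polynomial.eval_map, Polynomial.eval₂_hom]
    rw [key, ← eval_eq_eval_mv_eval']
    have hpt : (Fin.cons (eval x u) x : Fin 2 → ℂ) = fun i => (x 0 / b) * (![a, b] i) := by
      funext i
      refine Fin.cases ?_ ?_ i
      · simp [hu]; ring
      · intro j
        have : j = 0 := Subsingleton.elim _ _
        subst this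
        simp [Fin.cons_succ]
        field_simp
    rw [hpt, eval_hom_smul hR, h0, mul_zero, map_zero]
  have hdvd1 : (Polynomial.X - Polynomial.C u) ∣ finSuccEquiv ℂ 1 R :=
    Polynomial.dvd_iff_isRoot.mpr hroot
  have himg : (finSuccEquiv ℂ 1) (X 0 - C (a / b) * X 1) = Polynomial.X - Polynomial.C u := by
    have h1 : (1 : Fin 2) = Fin.succ 0 := rfl
    rw [map_sub, map_mul, finSuccEquiv_X_zero, h1, finSuccEquiv_X_succ]
    simp [hu, Polynomial.C_mul, finSuccEquiv_apply]
  have hdvd2 : (X 0 - C (a / b) * X 1) ∣ R := by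
    have := map_dvd (finSuccEquiv ℂ 1).symm (by rw [himg]; exact hdvd1 :
      (finSuccEquiv ℂ 1) (X 0 - C (a / b) * X 1) ∣ finSuccEquiv ℂ 1 R)
    simpa using this
  have hL : (C b : MvPolynomial (Fin 2) ℂ) * (X 0 - C (a / b) * X 1)
      = C b * X 0 - C a * X 1 := by
    rw [mul_sub, ← mul_assoc, ← C_mul]
    rw [mul_div_cancel₀ a hb]
  rw [← hL]
  exact ((isUnit_iff_ne_zero.mpr hb).map (C : ℂ →+* MvPolynomial (Fin 2) ℂ)).mul_left_dvd.mpr hdvd2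

/-- A homogeneous binary form vanishing at `(a,b) ≠ (0,0)` is divisible by the
corresponding linear form. -/
lemma lin_dvd_of_root {n : ℕ} {R : MvPolynomial (Fin 2) ℂ} (hR : R.IsHomogeneous n)
    {a b : ℂ} (hab : ¬(a = 0 ∧ b = 0)) (h0 : eval ![a, b] R = 0) :
    (C b * X 0 - C a * X 1) ∣ R := by
  by_cases hb : b ≠ 0
  · exact lin_dvd_of_root_b hR hb h0
  · push_neg at hb
    subst hb
    have ha : a ≠ 0 := fun h => hab ⟨h, rfl⟩
    set w : Fin 2 → Fin 2 := (Equiv.swap (0 : Fin 2) 1 : Fin 2 → Fin 2) with hw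
    have hsw : eval ![(0:ℂ), a] (rename w R) = 0 := by
      have hcmp : (![(0:ℂ), a] ∘ w) = ![a, 0] := by
        funext i; fin_cases i <;> simp [hw]
      rw [eval_rename, hcmp, h0]
    have hdvd := lin_dvd_of_root_b (hR.rename_isHomogeneous (f := w)) ha hsw
    have := map_dvd (renameEquiv ℂ (Equiv.swap (0 : Fin 2) 1)) hdvd
    simp only [renameEquiv_apply, map_sub, map_mul, rename_C, rename_X] at this
    rw [← hw, rename_rename] at this
    have hww : w ∘ w = id := by
      funext i; simp [hw]
    rw [hww, rename_id, AlgHom.id_apply] at this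
    have h01 : w 0 = 1 := by simp [hw]
    have h10 : w 1 = 0 := by simp [hw]
    rw [h01, h10] at this
    have : -(C (0:ℂ) * X 0 - C a * X 1) ∣ R := by
      convert this using 1
      ring
    rwa [neg_dvd] at this

/-- A homogeneous polynomial divisible by a homogeneous linear form has a homogeneous
quotient. -/
lemma exists_homog_quotient {n : ℕ} {R M : MvPolynomial (Fin 2) ℂ}
    (hR : R.IsHomogeneous (n + 1)) (hM : M.IsHomogeneous 1) (hdvd : M ∣ R) :
    ∃ Q : MvPolynomial (Fin 2) ℂ, Q.IsHomogeneous n ∧ R = M * Q := by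
  obtain ⟨Q₀, rfl⟩ := hdvd
  by_cases h0 : M * Q₀ = 0
  · exact ⟨0, isHomogeneous_zero _ _ _, by rw [mul_zero, h0]⟩
  refine ⟨homogeneousComponent n Q₀, homogeneousComponent_isHomogeneous n Q₀, ?_⟩
  have hRc : homogeneousComponent (n + 1) (M * Q₀) = M * Q₀ := by
    rw [homogeneousComponent_of_mem ((mem_homogeneousSubmodule _ _).mpr hR), if_pos rfl]
  have key : M * Q₀ = if n ∈ Finset.range (Q₀.totalDegree + 1)
      then M * homogeneousComponent n Q₀ else 0 := by
    calc M * Q₀ = homogeneousComponent (n + 1) (M * Q₀) := hRc.symm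
      _ = homogeneousComponent (n + 1)
          (∑ k ∈ Finset.range (Q₀.totalDegree + 1), M * homogeneousComponent k Q₀) := by
            rw [← Finset.mul_sum, sum_homogeneousComponent Q₀]
      _ = ∑ k ∈ Finset.range (Q₀.totalDegree + 1),
          homogeneousComponent (n + 1) (M * homogeneousComponent k Q₀) := map_sum _ _ _
      _ = ∑ k ∈ Finset.range (Q₀.totalDegree + 1),
          if k = n then M * homogeneousComponent k Q₀ else 0 := by
            refine Finset.sum_congr rfl fun k _ => ?_
            rw [homogeneousComponent_of_mem ((mem_homogeneousSubmodule _ _).mpr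
              (hM.mul (homogeneousComponent_isHomogeneous k Q₀)))]
            by_cases hk : k = n
            · subst hk; rw [if_pos (by omega : k + 1 = 1 + k), if_pos rfl]
            · rw [if_neg (by omega), if_neg hk]
      _ = _ := Finset.sum_ite_eq' (Finset.range (Q₀.totalDegree + 1)) n
          (fun k => M * homogeneousComponent k Q₀)
  rw [key]
  split_ifs with h
  · rfl
  · exact absurd (key.trans (if_neg h)) h0

noncomputable abbrev emb : Fin 2 → Fin 4 := Fin.castLE (by norm_num)

lemma emb_inj : Function.Injective emb := Fin.castLE_injective _

lemma pderiv_emb_zero (j : Fin 4) (hj : ∀ i : Fin 2, emb i ≠ j)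
    (p : MvPolynomial (Fin 2) ℂ) : pderiv j (rename emb p) = 0 := by
  apply pderiv_eq_zero_of_notMem_vars
  intro hmem
  obtain ⟨i, _, hi⟩ := mem_vars_rename _ _ hmem
  exact hj i hi

lemma eval_emb (a b c e : ℂ) (p : MvPolynomial (Fin 2) ℂ) :
    eval ![a, b, c, e] (rename emb p) = eval ![a, b] p := by
  rw [eval_rename]
  have : (![a, b, c, e] ∘ emb) = ![a, b] := by funext i; fin_cases i <;> rfl
  rw [this]

lemma pderiv_emb0 (p : MvPolynomial (Fin 2) ℂ) :
    pderiv (0 : Fin 4) (rename emb p) = rename emb (pderiv 0 p) :=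
  pderiv_rename emb_inj 0 p

lemma pderiv_emb1 (p : MvPolynomial (Fin 2) ℂ) :
    pderiv (1 : Fin 4) (rename emb p) = rename emb (pderiv 1 p) :=
  pderiv_rename emb_inj 1 p

lemma pderiv_two (j : Fin 4) : pderiv j (2 : MvPolynomial (Fin 4) ℂ) = 0 := by
  rw [← map_ofNat (C : ℂ →+* MvPolynomial (Fin 4) ℂ) 2, pderiv_C]

/-- A quadric with vanishing discriminant which vanishes at a point has vanishing
gradient there (provided its coefficients are not all zero). -/
lemma quad_perfect_square {α β γ c e : ℂ} (hq : α * c ^ 2 + 2 * β * c * e + γ * e ^ 2 = 0)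
    (hdisc : β ^ 2 - α * γ = 0) (hne : ¬(α = 0 ∧ β = 0 ∧ γ = 0)) :
    α * c + β * e = 0 ∧ β * c + γ * e = 0 := by
  by_cases hα : α = 0
  · have hβ : β = 0 := by
      have h2 : β ^ 2 = 0 := by linear_combination hdisc + γ * hα
      exact pow_eq_zero_iff (by norm_num) |>.mp h2
    have hγ : γ ≠ 0 := fun h => hne ⟨hα, hβ, h⟩
    have he : e = 0 := by
      have : γ * e ^ 2 = 0 := by linear_combination hq - c^2 * hα - 2*c*e*hβ
      have he2 : e ^ 2 = 0 := by
        rcases mul_eq_zero.mp this with h | h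
        · exact absurd h hγ
        · exact h
      exact pow_eq_zero_iff (by norm_num) |>.mp he2
    refine ⟨by rw [hα, hβ]; ring, by rw [hβ, he]; ring⟩
  · have hsq : (α * c + β * e) ^ 2 = 0 := by linear_combination α * hq + e ^ 2 * hdisc
    have h1 : α * c + β * e = 0 := pow_eq_zero_iff (by norm_num) |>.mp hsq
    have h2 : α * (β * c + γ * e) = 0 := by linear_combination β * h1 - e * hdisc
    exact ⟨h1, (mul_eq_zero.mp h2).resolve_left hα⟩

/-- If the gradient (in `t`) of the discriminant vanishes, so do the `t`-partials of the
conic equation at a singular `(c,e)`-direction. -/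
lemma S_zero {α β γ c e Dj Ej Fj : ℂ} (h1 : α * c + β * e = 0) (h2 : β * c + γ * e = 0)
    (hRj : 2 * β * Ej - Dj * γ - α * Fj = 0) (hne : ¬(α = 0 ∧ β = 0 ∧ γ = 0)) :
    Dj * c ^ 2 + 2 * Ej * c * e + Fj * e ^ 2 = 0 := by
  have hA : α * (Dj * c ^ 2 + 2 * Ej * c * e + Fj * e ^ 2) = 0 := by
    linear_combination (-(e ^ 2)) * hRj + (2 * e * Ej + c * Dj) * h1 - e * Dj * h2
  have hC : γ * (Dj * c ^ 2 + 2 * Ej * c * e + Fj * e ^ 2) = 0 := by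
    linear_combination (-(c ^ 2)) * hRj + (2 * c * Ej + e * Fj) * h2 - c * Fj * h1
  have hB : β * (Dj * c ^ 2 + 2 * Ej * c * e + Fj * e ^ 2) = 0 := by
    linear_combination c * e * hRj + c * Dj * h2 + e * Fj * h1
  by_cases hα : α = 0
  · by_cases hβ : β = 0
    · have hγ : γ ≠ 0 := fun h => hne ⟨hα, hβ, h⟩
      exact (mul_eq_zero.mp hC).resolve_left hγ
    · exact (mul_eq_zero.mp hB).resolve_left hβ
  · exact (mul_eq_zero.mp hA).resolve_left hα

/-- The converse helper: the `t`-gradient of the discriminant vanishes at a point where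
all partials of `G` vanish. -/
lemma Rj_zero {α β γ c e Dj Ej Fj : ℂ} (h1 : α * c + β * e = 0) (h2 : β * c + γ * e = 0)
    (hc : c ≠ 0 ∨ e ≠ 0) (hS : Dj * c ^ 2 + 2 * Ej * c * e + Fj * e ^ 2 = 0) :
    2 * β * Ej - Dj * γ - α * Fj = 0 := by
  rcases hc with hc | he
  · have h : c ^ 2 * (2 * β * Ej - Dj * γ - α * Fj) = 0 := by
      linear_combination (2 * c * Ej + e * Fj) * h2 - c * Fj * h1 - γ * hS
    exact (mul_eq_zero.mp h).resolve_left (pow_ne_zero 2 hc)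
  · have h : e ^ 2 * (2 * β * Ej - Dj * γ - α * Fj) = 0 := by
      linear_combination (2 * e * Ej + c * Dj) * h1 - e * Dj * h2 - α * hS
    exact (mul_eq_zero.mp h).resolve_left (pow_ne_zero 2 he)

/-- Singular points of the curve `Σ : D y₁² + 2E y₁y₂ + F' y₂² = 0` on
`Γ × Γ^⊥ ≅ ℙ¹ × ℙ¹` correspond exactly to multiple roots of the small
discriminant `R = E² − D·F'`. -/
theorem sigma_singular_iff_multiple_root_of_small_discriminant
    (d : ℕ) (hd : 3 ≤ d)
    (D E F' : MvPolynomial (Fin 2) ℂ)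
    (hD : D.IsHomogeneous (d - 2)) (hE : E.IsHomogeneous (d - 2))
    (hF : F'.IsHomogeneous (d - 2))
    (hcz : ∀ x : Fin 2 → ℂ, x ≠ 0 →
      ¬(eval x D = 0 ∧ eval x E = 0 ∧ eval x F' = 0))
    (a b c e : ℂ) (hab : (a, b) ≠ (0, 0)) (hce : (c, e) ≠ (0, 0))
    (G : MvPolynomial (Fin 4) ℂ)
    (hG : G = rename (Fin.castLE (by norm_num)) D * X 2 ^ 2
        + 2 * rename (Fin.castLE (by norm_num)) E * X 2 * X 3
        + rename (Fin.castLE (by norm_num)) F' * X 3 ^ 2)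
    (hzero : eval ![a, b, c, e] G = 0) :
    (∀ i : Fin 4, eval ![a, b, c, e] (pderiv i G) = 0) ↔
      (MvPolynomial.C b * X 0 - MvPolynomial.C a * X 1) ^ 2 ∣ (E ^ 2 - D * F') := by
  have hab' : ¬(a = 0 ∧ b = 0) := by simpa [Prod.ext_iff] using hab
  have hce' : ¬(c = 0 ∧ e = 0) := by simpa [Prod.ext_iff] using hce
  have habor : a ≠ 0 ∨ b ≠ 0 := by
    rcases eq_or_ne a 0 with ha | ha
    · exact Or.inr fun hb => hab' ⟨ha, hb⟩
    · exact Or.inl ha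
  have hceor : c ≠ 0 ∨ e ≠ 0 := by
    rcases eq_or_ne c 0 with hc | hc
    · exact Or.inr fun he => hce' ⟨hc, he⟩
    · exact Or.inl hc
  have habv : ![a, b] ≠ 0 := by
    intro h
    have h0 := congrFun h 0
    have h1 := congrFun h 1
    simp at h0 h1
    exact hab' ⟨h0, h1⟩
  have hne : ¬(eval ![a, b] D = 0 ∧ eval ![a, b] E = 0 ∧ eval ![a, b] F' = 0) := hcz _ habv
  -- evaluations of G and its partials
  have hevG : eval ![a, b, c, e] G
      = eval ![a, b] D * c ^ 2 + 2 * eval ![a, b] E * c * e + eval ![a, b] F' * e ^ 2 := by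
    rw [hG]; simp [eval_emb]; try ring
  have hp2 : eval ![a, b, c, e] (pderiv 2 G)
      = 2 * (eval ![a, b] D * c + eval ![a, b] E * e) := by
    rw [hG]
    simp only [map_add, pderiv_mul, pderiv_pow, pderiv_X_self, pderiv_two,
      pderiv_emb_zero 2 (by decide), pderiv_X_of_ne (show (3 : Fin 4) ≠ 2 by decide)]
    simp [eval_emb]
    ring
  have hp3 : eval ![a, b, c, e] (pderiv 3 G)
      = 2 * (eval ![a, b] E * c + eval ![a, b] F' * e) := by
    rw [hG]
    simp only [map_add, pderiv_mul, pderiv_pow, pderiv_X_self, pderiv_two,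
      pderiv_emb_zero 3 (by decide), pderiv_X_of_ne (show (2 : Fin 4) ≠ 3 by decide)]
    simp [eval_emb]
    ring
  have hp0 : eval ![a, b, c, e] (pderiv 0 G)
      = eval ![a, b] (pderiv 0 D) * c ^ 2 + 2 * eval ![a, b] (pderiv 0 E) * c * e
        + eval ![a, b] (pderiv 0 F') * e ^ 2 := by
    rw [hG]
    simp only [map_add, pderiv_mul, pderiv_pow, pderiv_two, pderiv_emb0,
      pderiv_X_of_ne (show (2 : Fin 4) ≠ 0 by decide),
      pderiv_X_of_ne (show (3 : Fin 4) ≠ 0 by decide)]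
    simp [eval_emb]
    try ring
  have hp1 : eval ![a, b, c, e] (pderiv 1 G)
      = eval ![a, b] (pderiv 1 D) * c ^ 2 + 2 * eval ![a, b] (pderiv 1 E) * c * e
        + eval ![a, b] (pderiv 1 F') * e ^ 2 := by
    rw [hG]
    simp only [map_add, pderiv_mul, pderiv_pow, pderiv_two, pderiv_emb1,
      pderiv_X_of_ne (show (2 : Fin 4) ≠ 1 by decide),
      pderiv_X_of_ne (show (3 : Fin 4) ≠ 1 by decide)]
    simp [eval_emb]
    try ring
  -- the discriminant and its properties
  have hRhom : (E ^ 2 - D * F').IsHomogeneous ((d - 2) + (d - 2)) := by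
    have h1 := hE.pow 2
    rw [mul_two] at h1
    exact h1.sub (hD.mul hF)
  have hevRp : eval ![a, b] (E ^ 2 - D * F')
      = eval ![a, b] E ^ 2 - eval ![a, b] D * eval ![a, b] F' := by simp
  have hpdRp : ∀ j : Fin 2, eval ![a, b] (pderiv j (E ^ 2 - D * F'))
      = 2 * eval ![a, b] E * eval ![a, b] (pderiv j E)
        - eval ![a, b] (pderiv j D) * eval ![a, b] F'
        - eval ![a, b] D * eval ![a, b] (pderiv j F') := by
    intro j
    simp only [map_sub, pderiv_mul, pderiv_pow]
    simp
    ring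
  have hLhom : (C b * X 0 - C a * X 1 : MvPolynomial (Fin 2) ℂ).IsHomogeneous 1 :=
    (isHomogeneous_C_mul_X b 0).sub (isHomogeneous_C_mul_X a 1)
  have hevL : eval ![a, b] (C b * X 0 - C a * X 1) = 0 := by simp; ring
  have hpdL0 : pderiv 0 (C b * X 0 - C a * X 1 : MvPolynomial (Fin 2) ℂ) = C b := by
    simp [pderiv_C_mul, pderiv_X_of_ne (show (1 : Fin 2) ≠ 0 by decide)]
  have hpdL1 : pderiv 1 (C b * X 0 - C a * X 1 : MvPolynomial (Fin 2) ℂ) = -C a := by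
    simp [pderiv_C_mul, pderiv_X_of_ne (show (0 : Fin 2) ≠ 1 by decide)]
  constructor
  · -- singular point ⇒ multiple root
    intro hs
    have e2 := hs 2
    rw [hp2] at e2
    have h1 : eval ![a, b] D * c + eval ![a, b] E * e = 0 :=
      (mul_eq_zero.mp e2).resolve_left two_ne_zero
    have e3 := hs 3
    rw [hp3] at e3
    have h2 : eval ![a, b] E * c + eval ![a, b] F' * e = 0 :=
      (mul_eq_zero.mp e3).resolve_left two_ne_zero
    have hS0 := hs 0
    rw [hp0] at hS0
    have hS1 := hs 1
    rw [hp1] at hS1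
    have hDisc : eval ![a, b] E ^ 2 - eval ![a, b] D * eval ![a, b] F' = 0 := by
      rcases hceor with hc | he
      · have h : c * (eval ![a, b] E ^ 2 - eval ![a, b] D * eval ![a, b] F') = 0 := by
          linear_combination eval ![a, b] E * h2 - eval ![a, b] F' * h1
        exact (mul_eq_zero.mp h).resolve_left hc
      · have h : e * (eval ![a, b] E ^ 2 - eval ![a, b] D * eval ![a, b] F') = 0 := by
          linear_combination eval ![a, b] E * h1 - eval ![a, b] D * h2
        exact (mul_eq_zero.mp h).resolve_left he
    have hevRp0 : eval ![a, b] (E ^ 2 - D * F') = 0 := by rw [hevRp]; exact hDisc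
    have hLd := lin_dvd_of_root hRhom hab' hevRp0
    have hRhom' : (E ^ 2 - D * F').IsHomogeneous (((d - 2) + (d - 2) - 1) + 1) := by
      have : ((d - 2) + (d - 2) - 1) + 1 = (d - 2) + (d - 2) := by omega
      rw [this]
      exact hRhom
    obtain ⟨Q, hQhom, hQ⟩ := exists_homog_quotient hRhom' hLhom hLd
    have hRj : ∀ j : Fin 2, eval ![a, b] (pderiv j (E ^ 2 - D * F')) = 0 := by
      intro j
      rw [hpdRp j]
      refine Rj_zero h1 h2 hceor ?_
      fin_cases j
      · exact hS0
      · exact hS1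
    have hq0 : b * eval ![a, b] Q = 0 := by
      have h := hRj 0
      rw [hQ, pderiv_mul, hpdL0] at h
      simp only [map_add, eval_mul, hevL, eval_C, zero_mul, add_zero, mul_zero] at h
      exact h
    have hq1 : a * eval ![a, b] Q = 0 := by
      have h := hRj 1
      rw [hQ, pderiv_mul, hpdL1] at h
      simp only [map_add, eval_mul, hevL, eval_C, zero_mul, add_zero, mul_zero,
        map_neg, neg_mul, neg_eq_zero] at h
      exact h
    have hqv : eval ![a, b] Q = 0 := by
      rcases habor with ha | hb
      · exact (mul_eq_zero.mp hq1).resolve_left ha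
      · exact (mul_eq_zero.mp hq0).resolve_left hb
    obtain ⟨T, hT⟩ := lin_dvd_of_root hQhom hab' hqv
    exact ⟨T, by rw [hQ, hT]; ring⟩
  · -- multiple root ⇒ singular point
    intro hdvd
    obtain ⟨T, hT⟩ := hdvd
    have hevRp0 : eval ![a, b] (E ^ 2 - D * F') = 0 := by
      rw [hT]
      simp [hevL]
    have hDisc : eval ![a, b] E ^ 2 - eval ![a, b] D * eval ![a, b] F' = 0 := by
      rw [← hevRp]; exact hevRp0
    have hqz : eval ![a, b] D * c ^ 2 + 2 * eval ![a, b] E * c * e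
        + eval ![a, b] F' * e ^ 2 = 0 := by rw [← hevG]; exact hzero
    obtain ⟨h1, h2⟩ := quad_perfect_square hqz hDisc hne
    have hRj0 : ∀ j : Fin 2, eval ![a, b] (pderiv j (E ^ 2 - D * F')) = 0 := by
      intro j
      rw [hT, pderiv_mul, pderiv_pow]
      simp [hevL]
    intro i
    fin_cases i
    · show eval ![a, b, c, e] (pderiv (0 : Fin 4) G) = 0
      rw [hp0]
      have h := hRj0 0
      rw [hpdRp 0] at h
      exact S_zero h1 h2 (by linear_combination h) hne
    · show eval ![a, b, c, e] (pderiv (1 : Fin 4) G) = 0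
      rw [hp1]
      have h := hRj0 1
      rw [hpdRp 1] at h
      exact S_zero h1 h2 (by linear_combination h) hne
    · show eval ![a, b, c, e] (pderiv (2 : Fin 4) G) = 0
      rw [hp2, h1]; ring
    · show eval ![a, b, c, e] (pderiv (3 : Fin 4) G) = 0
      rw [hp3, h2]; ring
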